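/- Fix constants K > 0, C₀ > 0, γ ≥ 0, an integer d ≥ 2, and an exponent α > (d−1)/2. There exists a constant c > 0 such that for every sufficiently large prime power q the following holds: suppose S ⊆ F_q^d satisfies S = −S, S is a γ-Salem set, and | |S| − K q^{d−1} | ≤ C₀ q^{d−1−α}. If E ⊆ F_q^d with |E| ≥ c q^{(7d+1)/8} (log q)^{γ/4}, then there exist a point z ∈ F_q^d and elements s₁, s₂, s₃ ∈ S such that the seven points z, z+s₁, z+s₂, z+s₃, z+s₁+s₂, z+s₁+s₃, z+s₂+s₃ are pairwise distinct and all belong to E. (Equivalently, the graph G_S(E) with vertex set E and edges x ∼ y whenever x − y ∈ S contains a copy of the 3-dimensional cube graph Q₃ with one vertex deleted.) -/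

import Mathlib

open scoped BigOperators Pointwise

/-- Fourier transform of (the indicator of) a finite set `S ⊆ F_q^d`:
`Ŝ(m) = q^{-d} ∑_{x ∈ S} χ(-m·x)`. -/
noncomputable def ftr {F : Type} [Field F] [Fintype F] {d : ℕ} (χ : AddChar F ℂ)
    (S : Finset (Fin d → F)) (m : Fin d → F) : ℂ :=
  ((Fintype.card F : ℂ) ^ d)⁻¹ * ∑ x ∈ S, χ (-(∑ i, m i * x i))

/-- `S` is a `γ`-Salem set: `|Ŝ(m)| ≤ q^{-d} (log q)^γ |S|^{1/2}` for all `m ≠ 0`. -/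
def IsSalemSet {F : Type} [Field F] [Fintype F] {d : ℕ}
    (χ : AddChar F ℂ) (γ : ℝ) (S : Finset (Fin d → F)) : Prop :=
  ∀ m : Fin d → F, m ≠ 0 →
    ‖ftr χ S m‖ ≤
      ((Fintype.card F : ℝ) ^ d)⁻¹ * Real.log (Fintype.card F) ^ γ *
        (S.card : ℝ) ^ ((1 : ℝ) / 2)

/-- `C ⊆ E` is shattered by the hypothesis class `H_S(E) = {h_y : y ∈ E}`,
`h_y(x) = 1 ↔ x - y ∈ S`. -/
def Shatters {V : Type} [Sub V] (E S C : Finset V) : Prop :=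
  C ⊆ E ∧ ∀ I ⊆ C, ∃ y ∈ E, ∀ x ∈ C, (x - y ∈ S ↔ x ∈ I)

/-- VC-dimension of the hypothesis class `H_S(E)`: the largest size of a shattered
subset of `E`. -/
noncomputable def vcDim {V : Type} [Sub V] (E S : Finset V) : ℕ :=
  sSup {n | ∃ C : Finset V, C.card = n ∧ Shatters E S C}

set_option linter.unusedSectionVars false
set_option maxHeartbeats 1000000

section aux
variable {F : Type} [Field F] [Fintype F] [DecidableEq F] {d : ℕ}

private lemma char_sum_eq (χ : AddChar F ℂ) {ι : Type*} (s : Finset ι) (f : ι → F) :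
    χ (∑ i ∈ s, f i) = ∏ i ∈ s, χ (f i) := by
  induction s using Finset.cons_induction with
  | empty => simp
  | cons a s ha ih => rw [Finset.sum_cons, Finset.prod_cons, AddChar.map_add_eq_mul, ih]

private lemma orth1 (χ : AddChar F ℂ) (hχ : χ ≠ 1) (a : F) :
    ∑ t : F, χ (t * a) = if a = 0 then (Fintype.card F : ℂ) else 0 := by
  split_ifs with h
  · simp [h, Finset.card_univ]
  · have hprim : χ.IsPrimitive := AddChar.IsPrimitive.of_ne_one hχ
    have h1 : χ.mulShift a ≠ 1 := hprim h
    have h0 : χ.mulShift a ≠ 0 := by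
      have hz : (0 : AddChar F ℂ) = 1 := rfl
      rw [hz]; exact h1
    have hsum := AddChar.sum_eq_zero_iff_ne_zero.mpr h0
    calc ∑ t : F, χ (t * a) = ∑ t : F, χ.mulShift a t := by
          refine Finset.sum_congr rfl fun t _ => ?_
          rw [AddChar.mulShift_apply, mul_comm]
      _ = 0 := hsum

private lemma orthV (χ : AddChar F ℂ) (hχ : χ ≠ 1) (u : Fin d → F) :
    ∑ m : Fin d → F, χ (∑ i, m i * u i) = if u = 0 then ((Fintype.card F : ℂ) ^ d) else 0 := by
  have h1 : ∀ m : Fin d → F, χ (∑ i, m i * u i) = ∏ i, χ (m i * u i) := fun m =>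
    char_sum_eq χ _ _
  simp_rw [h1]
  rw [← Fintype.piFinset_univ]
  have h2 := Finset.prod_univ_sum (fun _ : Fin d => (Finset.univ : Finset F))
    (fun i t => χ (t * u i))
  rw [← h2]
  simp_rw [orth1 χ hχ]
  by_cases hu : u = 0
  · simp [hu, Finset.card_univ]
  · rw [if_neg hu]
    obtain ⟨i, hi⟩ : ∃ i, u i ≠ 0 := by
      by_contra h; push_neg at h; exact hu (funext h)
    exact Finset.prod_eq_zero (Finset.mem_univ i) (by simp [hi])


private lemma count_identity (χ : AddChar F ℂ) (hχ : χ ≠ 1) (S A : Finset (Fin d → F)) :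
    ∑ m : Fin d → F,
      (∑ s ∈ S, χ (-(∑ i, m i * s i))) *
        ((∑ x ∈ A, χ (∑ i, m i * x i)) * (∑ y ∈ A, χ (-(∑ i, m i * y i))))
      = (Fintype.card F : ℂ) ^ d * ∑ s ∈ S, ((A.filter fun y => y + s ∈ A).card : ℂ) := by
  have step : ∀ m : Fin d → F, (∑ s ∈ S, χ (-(∑ i, m i * s i))) *
        ((∑ x ∈ A, χ (∑ i, m i * x i)) * (∑ y ∈ A, χ (-(∑ i, m i * y i))))
      = ∑ s ∈ S, ∑ x ∈ A, ∑ y ∈ A, χ (∑ i, m i * ((x - y - s) i)) := by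
    intro m
    rw [Finset.sum_mul_sum, Finset.sum_mul_sum]
    refine Finset.sum_congr rfl fun s _ => Finset.sum_congr rfl fun x _ => ?_
    rw [Finset.mul_sum]
    refine Finset.sum_congr rfl fun y _ => ?_
    have harg : (∑ i, m i * ((x - y - s) i))
        = (-(∑ i, m i * s i)) + ((∑ i, m i * x i) + (-(∑ i, m i * y i))) := by
      simp only [Pi.sub_apply, mul_sub, Finset.sum_sub_distrib]; ring
    rw [harg, AddChar.map_add_eq_mul, AddChar.map_add_eq_mul]
  calc ∑ m : Fin d → F, (∑ s ∈ S, χ (-(∑ i, m i * s i))) *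
        ((∑ x ∈ A, χ (∑ i, m i * x i)) * (∑ y ∈ A, χ (-(∑ i, m i * y i))))
      = ∑ m : Fin d → F, ∑ s ∈ S, ∑ x ∈ A, ∑ y ∈ A, χ (∑ i, m i * ((x - y - s) i)) := by
        exact Finset.sum_congr rfl fun m _ => step m
    _ = ∑ s ∈ S, ∑ x ∈ A, ∑ y ∈ A, ∑ m : Fin d → F, χ (∑ i, m i * ((x - y - s) i)) := by
        rw [Finset.sum_comm]
        refine Finset.sum_congr rfl fun s _ => ?_
        rw [Finset.sum_comm]
        refine Finset.sum_congr rfl fun x _ => ?_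
        rw [Finset.sum_comm]
    _ = ∑ s ∈ S, ∑ x ∈ A, ∑ y ∈ A,
          (if x - y - s = 0 then ((Fintype.card F : ℂ) ^ d) else 0) := by
        refine Finset.sum_congr rfl fun s _ => Finset.sum_congr rfl fun x _ =>
          Finset.sum_congr rfl fun y _ => orthV χ hχ _
    _ = ∑ s ∈ S, ∑ y ∈ A, ∑ x ∈ A,
          (if x = y + s then ((Fintype.card F : ℂ) ^ d) else 0) := by
        refine Finset.sum_congr rfl fun s _ => ?_
        rw [Finset.sum_comm]
        refine Finset.sum_congr rfl fun y _ => Finset.sum_congr rfl fun x _ => ?_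
        congr 1
        rw [sub_sub, sub_eq_zero]
    _ = ∑ s ∈ S, ∑ y ∈ A, (if y + s ∈ A then ((Fintype.card F : ℂ) ^ d) else 0) := by
        refine Finset.sum_congr rfl fun s _ => Finset.sum_congr rfl fun y _ => ?_
        exact Finset.sum_ite_eq' A (y + s) (fun _ => ((Fintype.card F : ℂ) ^ d))
    _ = (Fintype.card F : ℂ) ^ d * ∑ s ∈ S, ((A.filter fun y => y + s ∈ A).card : ℂ) := by
        rw [Finset.mul_sum]
        refine Finset.sum_congr rfl fun s _ => ?_
        rw [← Finset.sum_filter, Finset.sum_const, nsmul_eq_mul, mul_comm]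

private lemma parseval (χ : AddChar F ℂ) (hχ : χ ≠ 1) (A : Finset (Fin d → F)) :
    ∑ m : Fin d → F, (‖∑ y ∈ A, χ (-(∑ i, m i * y i))‖)^2
      = (Fintype.card F : ℝ)^d * A.card := by
  have hc : ∑ m : Fin d → F,
      (∑ x ∈ A, χ (∑ i, m i * x i)) * (∑ y ∈ A, χ (-(∑ i, m i * y i)))
      = (Fintype.card F : ℂ)^d * A.card := by
    have step : ∀ m : Fin d → F,
        (∑ x ∈ A, χ (∑ i, m i * x i)) * (∑ y ∈ A, χ (-(∑ i, m i * y i)))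
        = ∑ x ∈ A, ∑ y ∈ A, χ (∑ i, m i * ((x - y) i)) := by
      intro m
      rw [Finset.sum_mul_sum]
      refine Finset.sum_congr rfl fun x _ => Finset.sum_congr rfl fun y _ => ?_
      have harg : (∑ i, m i * ((x - y) i))
          = (∑ i, m i * x i) + (-(∑ i, m i * y i)) := by
        simp only [Pi.sub_apply, mul_sub, Finset.sum_sub_distrib]; ring
      rw [harg, AddChar.map_add_eq_mul]
    calc ∑ m : Fin d → F, (∑ x ∈ A, χ (∑ i, m i * x i)) * (∑ y ∈ A, χ (-(∑ i, m i * y i)))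
        = ∑ m : Fin d → F, ∑ x ∈ A, ∑ y ∈ A, χ (∑ i, m i * ((x - y) i)) :=
          Finset.sum_congr rfl fun m _ => step m
      _ = ∑ x ∈ A, ∑ y ∈ A, ∑ m : Fin d → F, χ (∑ i, m i * ((x - y) i)) := by
          rw [Finset.sum_comm]
          refine Finset.sum_congr rfl fun x _ => ?_
          rw [Finset.sum_comm]
      _ = ∑ x ∈ A, ∑ y ∈ A, (if x - y = 0 then ((Fintype.card F : ℂ) ^ d) else 0) := by
          refine Finset.sum_congr rfl fun x _ => Finset.sum_congr rfl fun y _ => orthV χ hχ _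
      _ = ∑ x ∈ A, ∑ y ∈ A, (if y = x then ((Fintype.card F : ℂ) ^ d) else 0) := by
          refine Finset.sum_congr rfl fun x _ => Finset.sum_congr rfl fun y _ => ?_
          congr 1
          rw [sub_eq_zero]
          exact propext eq_comm
      _ = ∑ x ∈ A, (if x ∈ A then ((Fintype.card F : ℂ) ^ d) else 0) := by
          refine Finset.sum_congr rfl fun x _ => ?_
          exact Finset.sum_ite_eq' A x (fun _ => ((Fintype.card F : ℂ) ^ d))
      _ = (Fintype.card F : ℂ)^d * A.card := by
          rw [Finset.sum_congr rfl fun x hx => if_pos hx, Finset.sum_const, nsmul_eq_mul,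
            mul_comm]
  have habs : ∀ m : Fin d → F,
      (∑ x ∈ A, χ (∑ i, m i * x i)) * (∑ y ∈ A, χ (-(∑ i, m i * y i)))
      = ((‖∑ y ∈ A, χ (-(∑ i, m i * y i))‖)^2 : ℝ) := by
    intro m
    have h1 : (∑ x ∈ A, χ (∑ i, m i * x i))
        = (starRingEnd ℂ) (∑ y ∈ A, χ (-(∑ i, m i * y i))) := by
      rw [map_sum]
      refine Finset.sum_congr rfl fun y _ => ?_
      rw [AddChar.map_neg_eq_conj, Complex.conj_conj]
    rw [h1, mul_comm, Complex.mul_conj, Complex.normSq_eq_norm_sq]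
  have h2 : ((∑ m : Fin d → F, (‖∑ y ∈ A, χ (-(∑ i, m i * y i))‖)^2 : ℝ) : ℂ)
      = (((Fintype.card F : ℝ)^d * A.card : ℝ) : ℂ) := by
    push_cast
    rw [← hc]
    refine Finset.sum_congr rfl fun m _ => ?_
    rw [habs m]
    push_cast
    ring
  exact_mod_cast h2

private lemma salem_bound {γ : ℝ} (χ : AddChar F ℂ) {S : Finset (Fin d → F)}
    (hS : IsSalemSet χ γ S) {m : Fin d → F} (hm : m ≠ 0) :
    ‖∑ s ∈ S, χ (-(∑ i, m i * s i))‖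
      ≤ Real.log (Fintype.card F) ^ γ * (S.card : ℝ) ^ ((1 : ℝ) / 2) := by
  have h := hS m hm
  unfold ftr at h
  rw [norm_mul] at h
  have hq : (0:ℝ) < (Fintype.card F : ℝ)^d := by
    have : 0 < Fintype.card F := Fintype.card_pos
    positivity
  have habs : ‖((Fintype.card F : ℂ) ^ d)⁻¹‖ = ((Fintype.card F : ℝ)^d)⁻¹ := by
    rw [norm_inv, norm_pow, Complex.norm_natCast]
  rw [habs] at h
  calc ‖∑ s ∈ S, χ (-(∑ i, m i * s i))‖
      = ((Fintype.card F : ℝ)^d) * (((Fintype.card F : ℝ)^d)⁻¹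
          * ‖∑ s ∈ S, χ (-(∑ i, m i * s i))‖) := by
        field_simp
    _ ≤ ((Fintype.card F : ℝ)^d) * (((Fintype.card F : ℝ)^d)⁻¹
          * Real.log (Fintype.card F) ^ γ * (S.card : ℝ) ^ ((1 : ℝ) / 2)) :=
        mul_le_mul_of_nonneg_left h hq.le
    _ = Real.log (Fintype.card F) ^ γ * (S.card : ℝ) ^ ((1 : ℝ) / 2) := by
        field_simp

private lemma step_bound {γ : ℝ} (χ : AddChar F ℂ) (hχ : χ ≠ 1) (S : Finset (Fin d → F))
    (hS : IsSalemSet χ γ S) (hγnn : 0 ≤ Real.log (Fintype.card F) ^ γ)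
    (A : Finset (Fin d → F)) :
    (S.card : ℝ) * (A.card:ℝ)^2
        - (Real.log (Fintype.card F) ^ γ * (S.card : ℝ) ^ ((1 : ℝ) / 2))
            * ((Fintype.card F : ℝ)^d * A.card)
      ≤ (Fintype.card F : ℝ)^d * ∑ s ∈ S, ((A.filter fun y => y + s ∈ A).card : ℝ) := by
  classical
  set L : ℝ := Real.log (Fintype.card F) ^ γ * (S.card : ℝ) ^ ((1 : ℝ) / 2) with hL
  have hLnn : 0 ≤ L := by
    have : (0:ℝ) ≤ (S.card : ℝ) ^ ((1 : ℝ) / 2) := Real.rpow_nonneg (Nat.cast_nonneg _) _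
    exact mul_nonneg hγnn this
  have hkey := count_identity χ hχ S A
  set eS : (Fin d → F) → ℂ := fun m => ∑ s ∈ S, χ (-(∑ i, m i * s i)) with heS
  set eA : (Fin d → F) → ℂ := fun m => ∑ y ∈ A, χ (-(∑ i, m i * y i)) with heA
  set eA' : (Fin d → F) → ℂ := fun m => ∑ x ∈ A, χ (∑ i, m i * x i) with heA'
  have hzero : eS 0 * (eA' 0 * eA 0) = ((S.card : ℝ) * (A.card:ℝ)^2 : ℝ) := by
    have h1 : eS 0 = (S.card : ℂ) := by rw [heS]; simp
    have h2 : eA 0 = (A.card : ℂ) := by rw [heA]; simp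
    have h3 : eA' 0 = (A.card : ℂ) := by rw [heA']; simp
    rw [h1, h2, h3]
    push_cast
    ring
  have hsplit : ∑ m : Fin d → F, eS m * (eA' m * eA m)
      = eS 0 * (eA' 0 * eA 0) + ∑ m ∈ (Finset.univ.erase 0), eS m * (eA' m * eA m) :=
    (Finset.add_sum_erase _ _ (Finset.mem_univ 0)).symm
  have herr : ‖∑ m ∈ (Finset.univ.erase 0), eS m * (eA' m * eA m)‖
      ≤ L * ((Fintype.card F : ℝ)^d * A.card) := by
    calc ‖∑ m ∈ (Finset.univ.erase 0), eS m * (eA' m * eA m)‖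
        ≤ ∑ m ∈ (Finset.univ.erase 0), ‖eS m * (eA' m * eA m)‖ := by
          exact norm_sum_le _ _
      _ ≤ ∑ m ∈ (Finset.univ.erase 0), L * (‖eA m‖)^2 := by
          refine Finset.sum_le_sum fun m hm => ?_
          have hm0 : m ≠ 0 := (Finset.mem_erase.mp hm).1
          rw [norm_mul, norm_mul]
          have h1 : ‖eS m‖ ≤ L := salem_bound χ hS hm0
          have h2 : ‖eA' m‖ = ‖eA m‖ := by
            have hconj : eA' m = (starRingEnd ℂ) (eA m) := by
              rw [heA', heA, map_sum]
              refine Finset.sum_congr rfl fun y _ => ?_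
              rw [AddChar.map_neg_eq_conj, Complex.conj_conj]
            rw [hconj, Complex.norm_conj]
          rw [h2]
          have hnn2 : (0:ℝ) ≤ ‖eA m‖ * ‖eA m‖ :=
            mul_nonneg (norm_nonneg _) (norm_nonneg _)
          calc ‖eS m‖ * (‖eA m‖ * ‖eA m‖)
              ≤ L * (‖eA m‖ * ‖eA m‖) :=
                mul_le_mul_of_nonneg_right h1 hnn2
            _ = L * (‖eA m‖)^2 := by ring
      _ ≤ ∑ m : Fin d → F, L * (‖eA m‖)^2 := by
          refine Finset.sum_le_sum_of_subset_of_nonneg (Finset.erase_subset _ _)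
            fun m _ _ => ?_
          exact mul_nonneg hLnn (sq_nonneg _)
      _ = L * ((Fintype.card F : ℝ)^d * A.card) := by
          rw [← Finset.mul_sum, parseval χ hχ A]
  set Nr : ℝ := ∑ s ∈ S, ((A.filter fun y => y + s ∈ A).card : ℝ) with hNr
  have hcast : ((Fintype.card F : ℂ) ^ d * ∑ s ∈ S, ((A.filter fun y => y + s ∈ A).card : ℂ))
      = (((Fintype.card F : ℝ)^d * Nr : ℝ) : ℂ) := by
    rw [hNr]
    push_cast
    ring
  have hre : (((Fintype.card F : ℝ)^d * Nr - (S.card : ℝ) * (A.card:ℝ)^2 : ℝ) : ℂ)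
      = ∑ m ∈ (Finset.univ.erase 0), eS m * (eA' m * eA m) := by
    have := hsplit
    rw [hkey] at this
    rw [hcast] at this
    rw [hzero] at this
    push_cast at this ⊢
    linear_combination this
  have habs2 : |(Fintype.card F : ℝ)^d * Nr - (S.card : ℝ) * (A.card:ℝ)^2|
      ≤ L * ((Fintype.card F : ℝ)^d * A.card) := by
    rw [← Real.norm_eq_abs, ← Complex.norm_real, hre]
    exact herr
  have := (abs_le.mp habs2).1
  linarith

private lemma select {γ : ℝ} (χ : AddChar F ℂ) (hχ : χ ≠ 1) (S : Finset (Fin d → F))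
    (hS : IsSalemSet χ γ S) (hγnn : 0 ≤ Real.log (Fintype.card F) ^ γ)
    (A Bad : Finset (Fin d → F)) (hBad : Bad.card ≤ 9) (hSB : Bad.card < S.card) :
    ∃ s ∈ S, s ∉ Bad ∧
      (A.card:ℝ)^2/(Fintype.card F:ℝ)^d
          - (Real.log (Fintype.card F) ^ γ * (S.card : ℝ) ^ ((1:ℝ)/2) + 9)
              * A.card / S.card
        ≤ ((A.filter fun y => y + s ∈ A).card : ℝ) := by
  classical
  set D : ℝ := (Fintype.card F : ℝ)^d with hD'
  have hD : 0 < D := by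
    have : 0 < Fintype.card F := Fintype.card_pos
    positivity
  set L : ℝ := Real.log (Fintype.card F) ^ γ * (S.card : ℝ) ^ ((1:ℝ)/2) with hL
  have hLnn : 0 ≤ L :=
    mul_nonneg hγnn (Real.rpow_nonneg (Nat.cast_nonneg _) _)
  set f : (Fin d → F) → ℝ := fun s => ((A.filter fun y => y + s ∈ A).card : ℝ) with hf
  have hfnn : ∀ s, 0 ≤ f s := fun s => Nat.cast_nonneg _
  have hfle : ∀ s, f s ≤ (A.card : ℝ) := fun s => by
    exact_mod_cast Nat.cast_le.mpr (Finset.card_filter_le _ _)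
  set Sc : ℝ := (S.card : ℝ) with hSc'
  have hSc : 0 < Sc := by
    have h0 : 0 < S.card := lt_of_le_of_lt (Nat.zero_le _) hSB
    rw [hSc']
    exact_mod_cast h0
  set a : ℝ := (A.card : ℝ) with ha'
  have ha : 0 ≤ a := Nat.cast_nonneg _
  set t : ℝ := a^2/D - (L + 9) * a / Sc with ht'
  have hT : (S \ Bad).Nonempty := by
    rw [← Finset.card_pos]
    have h1 := Finset.le_card_sdiff Bad S
    omega
  by_cases htpos : t ≤ 0
  · obtain ⟨s, hs⟩ := hT
    rw [Finset.mem_sdiff] at hs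
    exact ⟨s, hs.1, hs.2, le_trans htpos (hfnn s)⟩
  push_neg at htpos
  by_contra hcon
  push_neg at hcon
  have hflt : ∀ s ∈ S \ Bad, f s < t := by
    intro s hs
    rw [Finset.mem_sdiff] at hs
    exact hcon s hs.1 hs.2
  have hsum_split : ∑ s ∈ S ∩ Bad, f s + ∑ s ∈ S \ Bad, f s = ∑ s ∈ S, f s :=
    Finset.sum_inter_add_sum_sdiff S Bad f
  have hsum_bad : ∑ s ∈ S ∩ Bad, f s ≤ 9 * a := by
    calc ∑ s ∈ S ∩ Bad, f s ≤ ∑ s ∈ S ∩ Bad, a := Finset.sum_le_sum fun s _ => hfle s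
      _ = (S ∩ Bad).card * a := by rw [Finset.sum_const, nsmul_eq_mul]
      _ ≤ 9 * a := by
        have h1 : (S ∩ Bad).card ≤ 9 := le_trans
          (Finset.card_le_card (Finset.inter_subset_right)) hBad
        have : ((S ∩ Bad).card : ℝ) ≤ 9 := by exact_mod_cast h1
        nlinarith
  have hsum_good : ∑ s ∈ S \ Bad, f s < Sc * t := by
    calc ∑ s ∈ S \ Bad, f s < ∑ s ∈ S \ Bad, t := Finset.sum_lt_sum_of_nonempty hT hflt
      _ = ((S \ Bad).card : ℝ) * t := by rw [Finset.sum_const, nsmul_eq_mul]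
      _ ≤ Sc * t := by
        have h1 : (S \ Bad).card ≤ S.card := Finset.card_le_card (Finset.sdiff_subset)
        have h2 : ((S \ Bad).card : ℝ) ≤ Sc := by rw [hSc']; exact_mod_cast h1
        nlinarith
  have hsum2 := step_bound χ hχ S hS hγnn A
  have hDt : D * (Sc * t) = Sc * a^2 - (L + 9) * a * D := by
    rw [ht']
    field_simp
  have hstep' : Sc * a^2 - L * (D * a) ≤ D * ∑ s ∈ S, f s := hsum2
  have hlt : D * ∑ s ∈ S, f s < D * (Sc * t + 9 * a) := by
    have : ∑ s ∈ S, f s < Sc * t + 9 * a := by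
      rw [← hsum_split]; linarith
    nlinarith
  nlinarith

end aux

private lemma chain_aux {n n' b D W : ℝ} (hD : 0 < D) (hb : b ≤ n) (hbpos : 0 < b)
    (hW : W ≤ b/(2*D)) (hstep : n^2/D - W*n ≤ n') : b^2/(2*D) ≤ n' := by
  have h2D : 0 < 2*D := by linarith
  have hW2 : W * (2*D) ≤ b := (le_div_iff₀ h2D).mp hW
  have hn : 0 ≤ n := le_trans hbpos.le hb
  rw [div_le_iff₀ h2D]
  have e1 : (n^2/D - W*n)*D = n^2 - W*n*D := by field_simp
  have hstep2 : n^2 - W*n*D ≤ n' * D := by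
    have := mul_le_mul_of_nonneg_right hstep hD.le
    rw [e1] at this
    exact this
  nlinarith [mul_nonneg (by linarith : (0:ℝ) ≤ 2*n+b) (by linarith : (0:ℝ) ≤ n - b),
    mul_le_mul_of_nonneg_right hW2 hn]

private lemma card_le_insert {α : Type*} [DecidableEq α] {s : Finset α} {a : α} {n : ℕ}
    (h : s.card ≤ n) : (insert a s).card ≤ n + 1 :=
  (Finset.card_insert_le _ _).trans (by omega)


/-- cube minus a vertex: for a symmetric γ-Salem set `S` of size
`≈ K q^{d-1}` and `|E| ≥ c q^{(7d+1)/8} (log q)^{γ/4}`, there are `z` and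
`s₁, s₂, s₃ ∈ S` such that the seven points `z, z+s₁, z+s₂, z+s₃, z+s₁+s₂, z+s₁+s₃,
z+s₂+s₃` are pairwise distinct and all lie in `E`. -/
theorem cube_minus_vertex
    (K C₀ γ : ℝ) (hK : 0 < K) (hC₀ : 0 < C₀) (hγ : 0 ≤ γ)
    (d : ℕ) (hd : 2 ≤ d) (α : ℝ) (hα : ((d : ℝ) - 1) / 2 < α) :
    ∃ c : ℝ, 0 < c ∧ ∃ Q : ℕ,
      ∀ (F : Type) [Field F] [Fintype F] [DecidableEq F],
        Q ≤ Fintype.card F →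
        ∀ χ : AddChar F ℂ, χ ≠ 1 →
        ∀ S : Finset (Fin d → F),
          (∀ x, x ∈ S ↔ -x ∈ S) →
          IsSalemSet χ γ S →
          |(S.card : ℝ) - K * (Fintype.card F : ℝ) ^ ((d : ℝ) - 1)| ≤
            C₀ * (Fintype.card F : ℝ) ^ ((d : ℝ) - 1 - α) →
          ∀ E : Finset (Fin d → F),
            c * (Fintype.card F : ℝ) ^ ((7 * (d : ℝ) + 1) / 8) *
                Real.log (Fintype.card F) ^ (γ / 4) ≤ (E.card : ℝ) →
            ∃ z s₁ s₂ s₃ : Fin d → F, s₁ ∈ S ∧ s₂ ∈ S ∧ s₃ ∈ S ∧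
              List.Pairwise (· ≠ ·)
                [z, z + s₁, z + s₂, z + s₃, z + s₁ + s₂, z + s₁ + s₃, z + s₂ + s₃] ∧
              ∀ p ∈ [z, z + s₁, z + s₂, z + s₃, z + s₁ + s₂, z + s₁ + s₃, z + s₂ + s₃],
                p ∈ E := by
  have hd2 : (2:ℝ) ≤ (d:ℝ) := by exact_mod_cast hd
  have hd1 : (1:ℝ) ≤ (d:ℝ) - 1 := by linarith
  have hα0 : 0 < α := lt_of_lt_of_le (by linarith : (0:ℝ) < 1/2) (le_of_lt (by linarith))
  set M : ℝ := 2*((2*K)^((1:ℝ)/2) + 9)/K with hM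
  have hMpos : 0 < M := by
    have h1 : 0 < (2*K)^((1:ℝ)/2) := Real.rpow_pos_of_pos (by linarith) _
    rw [hM]; positivity
  set c : ℝ := max 1 (16*M) with hc
  have hc1 : (1:ℝ) ≤ c := le_max_left _ _
  have hc4 : 16*M ≤ c^4 := by
    have h1 : 16*M ≤ c := le_max_right _ _
    have h2 : c ≤ c^4 := by
      have := pow_le_pow_right₀ hc1 (by norm_num : 1 ≤ 4)
      simpa using this
    linarith
  refine ⟨c, by linarith, ?_⟩
  -- eventual largeness conditions
  have hev : ∀ᶠ x : ℝ in Filter.atTop,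
      3 ≤ x ∧ 2*C₀/K ≤ x^α ∧ 20/K ≤ x^((d:ℝ)-1)
        ∧ M * Real.log x ^ γ ≤ x^(((d:ℝ)-1)/4)/8 := by
    have h1 : ∀ᶠ x : ℝ in Filter.atTop, 3 ≤ x := Filter.eventually_ge_atTop 3
    have h2 : ∀ᶠ x : ℝ in Filter.atTop, 2*C₀/K ≤ x^α :=
      (tendsto_rpow_atTop hα0).eventually_ge_atTop _
    have h3 : ∀ᶠ x : ℝ in Filter.atTop, 20/K ≤ x^((d:ℝ)-1) :=
      (tendsto_rpow_atTop (by linarith : (0:ℝ) < (d:ℝ)-1)).eventually_ge_atTop _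
    have h4 : ∀ᶠ x : ℝ in Filter.atTop, M * Real.log x ^ γ ≤ x^(((d:ℝ)-1)/4)/8 := by
      have hlo := isLittleO_log_rpow_rpow_atTop γ
        (by linarith : (0:ℝ) < ((d:ℝ)-1)/4)
      have hb := (Asymptotics.isLittleO_iff.mp hlo)
        (show (0:ℝ) < 1/(8*M) by positivity)
      filter_upwards [hb, Filter.eventually_ge_atTop (1:ℝ)] with x hx hx1
      rw [Real.norm_eq_abs, Real.norm_eq_abs] at hx
      have hgnn : (0:ℝ) ≤ x^(((d:ℝ)-1)/4) := Real.rpow_nonneg (by linarith) _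
      have hfnn : (0:ℝ) ≤ Real.log x ^ γ := Real.rpow_nonneg (Real.log_nonneg hx1) _
      rw [abs_of_nonneg hfnn, abs_of_nonneg hgnn] at hx
      calc M * Real.log x ^ γ ≤ M * (1/(8*M) * x^(((d:ℝ)-1)/4)) :=
            mul_le_mul_of_nonneg_left hx hMpos.le
        _ = x^(((d:ℝ)-1)/4)/8 := by field_simp
    exact h1.and (h2.and (h3.and h4))
  obtain ⟨x₀, hx₀⟩ := Filter.eventually_atTop.mp hev
  refine ⟨⌈x₀⌉₊ + 1, ?_⟩
  intro F _ _ _ hQ χ hχ S hsym hSalem hsize E hE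
  classical
  -- Setup of real quantities
  set x : ℝ := (Fintype.card F : ℝ) with hx'
  have hxQ : x₀ ≤ x := by
    have h1 : ((⌈x₀⌉₊ + 1 : ℕ) : ℝ) ≤ x := by rw [hx']; exact_mod_cast hQ
    have h2 : x₀ ≤ (⌈x₀⌉₊ : ℝ) := Nat.le_ceil x₀
    push_cast at h1
    linarith
  obtain ⟨hx3, hα2, hd20, hMlog⟩ := hx₀ x hxQ
  have hx0 : (0:ℝ) < x := by linarith
  have hlog1 : (1:ℝ) ≤ Real.log x := by
    rw [show (1:ℝ) = Real.log (Real.exp 1) from (Real.log_exp 1).symm]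
    apply Real.log_le_log (Real.exp_pos 1)
    have := Real.exp_one_lt_d9
    linarith
  have hlqnn : (0:ℝ) ≤ Real.log x := by linarith
  have hγnn : (0:ℝ) ≤ Real.log x ^ γ := Real.rpow_nonneg hlqnn _
  set P : ℝ := Real.log x ^ (γ/4) with hP'
  set R : ℝ := x ^ (((d:ℝ)-1)/8) with hR'
  have hP1 : (1:ℝ) ≤ P := Real.one_le_rpow hlog1 (by positivity)
  have hR1 : (1:ℝ) ≤ R := Real.one_le_rpow (by linarith) (by positivity)
  have hRpos : (0:ℝ) < R := by linarith
  have hP4 : Real.log x ^ γ = P^(4:ℕ) := by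
    rw [hP', ← Real.rpow_natCast (Real.log x ^ (γ/4)) 4, ← Real.rpow_mul hlqnn]
    congr 1; push_cast; ring
  have hR8 : x ^ ((d:ℝ)-1) = R^(8:ℕ) := by
    rw [hR', ← Real.rpow_natCast (x ^ (((d:ℝ)-1)/8)) 8, ← Real.rpow_mul hx0.le]
    congr 1; push_cast; ring
  have hR4 : x ^ (((d:ℝ)-1)/2) = R^(4:ℕ) := by
    rw [hR', ← Real.rpow_natCast (x ^ (((d:ℝ)-1)/8)) 4, ← Real.rpow_mul hx0.le]
    congr 1; push_cast; ring
  have hR2 : x ^ (((d:ℝ)-1)/4) = R^(2:ℕ) := by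
    rw [hR', ← Real.rpow_natCast (x ^ (((d:ℝ)-1)/8)) 2, ← Real.rpow_mul hx0.le]
    congr 1; push_cast; ring
  set D : ℝ := (Fintype.card F : ℝ)^d with hD'
  have hDpos : (0:ℝ) < D := by
    have h0 : 0 < Fintype.card F := Fintype.card_pos
    rw [hD']; positivity
  have hDx : D = x ^ ((d:ℝ)) := by rw [hD', ← Real.rpow_natCast x d]
  have hD8 : x ^ ((7*(d:ℝ)+1)/8) * R = D := by
    rw [hR', ← Real.rpow_add hx0, hDx]
    congr 1; ring
  -- size of S
  have habsS := abs_le.mp hsize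
  have hxd1pos : (0:ℝ) < x ^ ((d:ℝ)-1) := Real.rpow_pos_of_pos hx0 _
  have hxapos : (0:ℝ) < x ^ α := Real.rpow_pos_of_pos hx0 _
  have herr_small : C₀ * x^((d:ℝ)-1-α) ≤ (K/2) * x^((d:ℝ)-1) := by
    have e1 : x^((d:ℝ)-1-α) = x^((d:ℝ)-1) / x^α := Real.rpow_sub hx0 _ _
    have hC : C₀ ≤ K/2 * x^α := by
      rw [div_le_iff₀ hK] at hα2
      linarith
    rw [e1]
    calc C₀ * (x^((d:ℝ)-1) / x^α) ≤ (K/2 * x^α) * (x^((d:ℝ)-1) / x^α) :=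
          mul_le_mul_of_nonneg_right hC (by positivity)
      _ = (K/2) * x^((d:ℝ)-1) := by field_simp
  have hKx_nn : (0:ℝ) ≤ K * x^((d:ℝ)-1) := by positivity
  have hSlow : (K/2) * x^((d:ℝ)-1) ≤ (S.card:ℝ) := by linarith [habsS.1]
  have hShigh : (S.card:ℝ) ≤ 2*K * x^((d:ℝ)-1) := by linarith [habsS.2]
  have hS10 : (10:ℝ) ≤ (S.card:ℝ) := by
    have h1 : K/2 * (20/K) ≤ K/2 * x^((d:ℝ)-1) :=
      mul_le_mul_of_nonneg_left hd20 (by linarith)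
    have h2 : K/2 * (20/K) = 10 := by field_simp; ring
    linarith
  have hS9 : 9 < S.card := by exact_mod_cast (show (9:ℝ) < (S.card:ℝ) by linarith)
  have hScpos : (0:ℝ) < (S.card:ℝ) := by linarith
  -- the error coefficient W
  set L : ℝ := Real.log x ^ γ * (S.card:ℝ) ^ ((1:ℝ)/2) with hL'
  set W : ℝ := (L + 9)/(S.card:ℝ) with hW'
  have hWnn : (0:ℝ) ≤ W := by
    have : (0:ℝ) ≤ L := mul_nonneg hγnn (Real.rpow_nonneg (Nat.cast_nonneg _) _)
    rw [hW']; positivity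
  have hsqrt : (S.card:ℝ)^((1:ℝ)/2) ≤ (2*K)^((1:ℝ)/2) * R^(4:ℕ) := by
    calc (S.card:ℝ)^((1:ℝ)/2) ≤ (2*K*x^((d:ℝ)-1))^((1:ℝ)/2) :=
        Real.rpow_le_rpow (Nat.cast_nonneg _) hShigh (by norm_num)
      _ = (2*K)^((1:ℝ)/2) * (x^((d:ℝ)-1))^((1:ℝ)/2) :=
        Real.mul_rpow (by linarith) hxd1pos.le
      _ = (2*K)^((1:ℝ)/2) * R^(4:ℕ) := by
        congr 1
        rw [← Real.rpow_mul hx0.le, ← hR4]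
        congr 1; ring
  have hP4ge : (1:ℝ) ≤ P^(4:ℕ) := by
    have := pow_le_pow_left₀ zero_le_one hP1 4
    simpa using this
  have hR4ge : (1:ℝ) ≤ R^(4:ℕ) := by
    have := pow_le_pow_left₀ zero_le_one hR1 4
    simpa using this
  have hMP : M * P^(4:ℕ) ≤ R^(2:ℕ)/8 := by
    rw [← hP4, ← hR2]; linarith [hMlog]
  have hWbound : W ≤ M * P^(4:ℕ) / R^(4:ℕ) := by
    have hden : (0:ℝ) < (K/2) * R^(8:ℕ) := by positivity
    have hLP : L + 9 ≤ ((2*K)^((1:ℝ)/2) + 9) * (P^(4:ℕ) * R^(4:ℕ)) := by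
      have h1 : L ≤ P^(4:ℕ) * ((2*K)^((1:ℝ)/2) * R^(4:ℕ)) := by
        rw [hL', hP4]
        exact mul_le_mul_of_nonneg_left hsqrt (by positivity)
      have h2 : (1:ℝ) ≤ P^(4:ℕ) * R^(4:ℕ) :=
        le_trans hP4ge (le_mul_of_one_le_right (by positivity) hR4ge)
      have e : P^(4:ℕ) * ((2*K)^((1:ℝ)/2) * R^(4:ℕ))
          = (2*K)^((1:ℝ)/2) * (P^(4:ℕ) * R^(4:ℕ)) := by ring
      rw [e] at h1
      have e2 : ((2*K)^((1:ℝ)/2) + 9) * (P^(4:ℕ) * R^(4:ℕ))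
          = (2*K)^((1:ℝ)/2) * (P^(4:ℕ) * R^(4:ℕ)) + 9 * (P^(4:ℕ) * R^(4:ℕ)) := by ring
      rw [e2]
      linarith
    have hSc8 : (K/2) * R^(8:ℕ) ≤ (S.card:ℝ) := by rw [← hR8]; exact hSlow
    have hLnn : (0:ℝ) ≤ L := mul_nonneg hγnn (Real.rpow_nonneg (Nat.cast_nonneg _) _)
    calc W ≤ (L+9) / ((K/2) * R^(8:ℕ)) := by
          rw [hW']
          gcongr
      _ ≤ (((2*K)^((1:ℝ)/2) + 9) * (P^(4:ℕ) * R^(4:ℕ))) / ((K/2) * R^(8:ℕ)) := by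
          gcongr
      _ = M * P^(4:ℕ) / R^(4:ℕ) := by
          rw [hM]
          field_simp
  -- chain lower bounds
  have hcpos : (0:ℝ) < c := by linarith
  have hPpos : (0:ℝ) < P := by linarith
  set b0 : ℝ := c * P * D / R with hb0'
  have hb0pos : (0:ℝ) < b0 := by
    rw [hb0']; exact div_pos (mul_pos (mul_pos hcpos hPpos) hDpos) hRpos
  set b1 : ℝ := b0^2/(2*D) with hb1'
  set b2 : ℝ := b1^2/(2*D) with hb2'
  set b3 : ℝ := b2^2/(2*D) with hb3'
  have hb1pos : (0:ℝ) < b1 := by rw [hb1']; exact div_pos (pow_pos hb0pos 2) (by linarith)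
  have hb2pos : (0:ℝ) < b2 := by rw [hb2']; exact div_pos (pow_pos hb1pos 2) (by linarith)
  have hb3pos : (0:ℝ) < b3 := by rw [hb3']; exact div_pos (pow_pos hb2pos 2) (by linarith)
  have hRkpos : ∀ k : ℕ, (0:ℝ) < R^k := fun k => pow_pos hRpos k
  have hW0 : W ≤ b0/(2*D) := by
    have e : b0/(2*D) = c*P/(2*R) := by rw [hb0']; field_simp
    rw [e]
    have hcross : M*P^(4:ℕ) * (2*R) ≤ c*P * R^(4:ℕ) := by
      have k1 : M*P^(4:ℕ)*(2*R) ≤ (R^(2:ℕ)/8)*(2*R) :=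
        mul_le_mul_of_nonneg_right (by linarith) (by linarith)
      have k2 : (R^(2:ℕ)/8)*(2*R) = R^(3:ℕ)/4 := by ring
      have k3 : R^(3:ℕ) ≤ R^(4:ℕ) := pow_le_pow_right₀ hR1 (by norm_num)
      have k4 : R^(4:ℕ) ≤ c*P*R^(4:ℕ) := by
        have h1cP : (1:ℝ) ≤ c*P := le_trans hc1 (le_mul_of_one_le_right (by linarith) hP1)
        exact le_mul_of_one_le_left (by positivity) h1cP
      linarith
    calc W ≤ M * P^(4:ℕ)/R^(4:ℕ) := hWbound
      _ ≤ c*P/(2*R) := by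
          rw [div_le_div_iff₀ (hRkpos 4) (by linarith : (0:ℝ) < 2*R)]
          linarith
  have hW1 : W ≤ b1/(2*D) := by
    have e : b1/(2*D) = c^2*P^2/(4*R^(2:ℕ)) := by
      rw [hb1', hb0']; field_simp; ring
    rw [e]
    have hcross : M*P^(4:ℕ) * (4*R^(2:ℕ)) ≤ c^2*P^2 * R^(4:ℕ) := by
      have k1 : M*P^(4:ℕ)*(4*R^(2:ℕ)) ≤ (R^(2:ℕ)/8)*(4*R^(2:ℕ)) :=
        mul_le_mul_of_nonneg_right (by linarith) (by positivity)
      have k2 : (R^(2:ℕ)/8)*(4*R^(2:ℕ)) = R^(4:ℕ)/2 := by ring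
      have k4 : R^(4:ℕ) ≤ c^2*P^2*R^(4:ℕ) := by
        have hc2 : (1:ℝ) ≤ c^2 := by
          have := pow_le_pow_left₀ zero_le_one hc1 2
          simpa using this
        have hP2 : (1:ℝ) ≤ P^2 := by
          have := pow_le_pow_left₀ zero_le_one hP1 2
          simpa using this
        have h1cP : (1:ℝ) ≤ c^2*P^2 :=
          le_trans hc2 (le_mul_of_one_le_right (by positivity) hP2)
        exact le_mul_of_one_le_left (by positivity) h1cP
      linarith
    calc W ≤ M * P^(4:ℕ)/R^(4:ℕ) := hWbound
      _ ≤ c^2*P^2/(4*R^(2:ℕ)) := by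
          rw [div_le_div_iff₀ (hRkpos 4) (by positivity : (0:ℝ) < 4*R^(2:ℕ))]
          linarith
  have hW2 : W ≤ b2/(2*D) := by
    have e : b2/(2*D) = c^4*P^4/(16*R^(4:ℕ)) := by
      rw [hb2', hb1', hb0']; field_simp; ring
    rw [e]
    have hcross : M*P^(4:ℕ) * (16*R^(4:ℕ)) ≤ c^4*P^4 * R^(4:ℕ) := by
      have k : 16*M*(P^(4:ℕ)*R^(4:ℕ)) ≤ c^4*(P^(4:ℕ)*R^(4:ℕ)) :=
        mul_le_mul_of_nonneg_right hc4 (by positivity)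
      linarith [k]
    calc W ≤ M * P^(4:ℕ)/R^(4:ℕ) := hWbound
      _ ≤ c^4*P^4/(16*R^(4:ℕ)) := by
          rw [div_le_div_iff₀ (hRkpos 4) (by positivity : (0:ℝ) < 16*R^(4:ℕ))]
          linarith
  have hEb0 : b0 ≤ (E.card:ℝ) := by
    have e : b0 = c * x^((7*(d:ℝ)+1)/8) * P := by
      rw [hb0', ← hD8]
      field_simp
    rw [e]
    exact hE
  have hDd : x ^ d = D := by rw [hD', hx']
  -- Step 1 : choose s3
  obtain ⟨s3, hs3S, hs3B, hstep1⟩ := select χ hχ S hSalem hγnn E {0}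
    (by norm_num) (by simp only [Finset.card_singleton]; omega)
  set E1 := E.filter (fun y => y + s3 ∈ E) with hE1'
  rw [← hx'] at hstep1
  rw [hDd, ← hL'] at hstep1
  have hWE1 : (L+9) * (E.card:ℝ)/(S.card:ℝ) = W * (E.card:ℝ) := by rw [hW']; ring
  rw [hWE1] at hstep1
  have hn1 : b1 ≤ (E1.card:ℝ) := by
    rw [hb1']; exact chain_aux hDpos hEb0 hb0pos hW0 hstep1
  -- Step 2 : choose s2
  obtain ⟨s2, hs2S, hs2B, hstep2⟩ := select χ hχ S hSalem hγnn E1 {0, s3, -s3}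
    (by
      have h1 : ({0, s3, -s3} : Finset (Fin d → F)).card ≤ 3 :=
        card_le_insert (card_le_insert (by simp))
      omega)
    (by
      have h1 : ({0, s3, -s3} : Finset (Fin d → F)).card ≤ 3 :=
        card_le_insert (card_le_insert (by simp))
      omega)
  set E2 := E1.filter (fun y => y + s2 ∈ E1) with hE2'
  rw [← hx'] at hstep2
  rw [hDd, ← hL'] at hstep2
  have hWE2 : (L+9) * (E1.card:ℝ)/(S.card:ℝ) = W * (E1.card:ℝ) := by rw [hW']; ring
  rw [hWE2] at hstep2
  have hn2 : b2 ≤ (E2.card:ℝ) := by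
    rw [hb2']; exact chain_aux hDpos hn1 hb1pos hW1 hstep2
  -- Step 3 : choose s1
  obtain ⟨s1, hs1S, hs1B, hstep3⟩ := select χ hχ S hSalem hγnn E2
    {0, s2, -s2, s3, -s3, s2+s3, s2-s3, s3-s2}
    (by
      have h1 : ({0, s2, -s2, s3, -s3, s2+s3, s2-s3, s3-s2} : Finset (Fin d → F)).card ≤ 8 :=
        card_le_insert (card_le_insert (card_le_insert (card_le_insert
          (card_le_insert (card_le_insert (card_le_insert (by simp)))))))
      omega)
    (by
      have h1 : ({0, s2, -s2, s3, -s3, s2+s3, s2-s3, s3-s2} : Finset (Fin d → F)).card ≤ 8 :=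
        card_le_insert (card_le_insert (card_le_insert (card_le_insert
          (card_le_insert (card_le_insert (card_le_insert (by simp)))))))
      omega)
  set E3 := E2.filter (fun y => y + s1 ∈ E2) with hE3'
  rw [← hx'] at hstep3
  rw [hDd, ← hL'] at hstep3
  have hWE3 : (L+9) * (E2.card:ℝ)/(S.card:ℝ) = W * (E2.card:ℝ) := by rw [hW']; ring
  rw [hWE3] at hstep3
  have hn3 : b3 ≤ (E3.card:ℝ) := by
    rw [hb3']; exact chain_aux hDpos hn2 hb2pos hW2 hstep3
  have hE3ne : E3.Nonempty := by
    rw [← Finset.card_pos]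
    have h0 : (0:ℝ) < (E3.card:ℝ) := lt_of_lt_of_le hb3pos hn3
    exact_mod_cast h0
  obtain ⟨z, hz⟩ := hE3ne
  -- memberships
  obtain ⟨hzE2, hzs1E2⟩ := Finset.mem_filter.mp hz
  obtain ⟨hzE1, hzs2E1⟩ := Finset.mem_filter.mp hzE2
  obtain ⟨hz1E1, hz1s2E1⟩ := Finset.mem_filter.mp hzs1E2
  have memE : ∀ w, w ∈ E1 → w ∈ E ∧ w + s3 ∈ E := fun w hw => Finset.mem_filter.mp hw
  obtain ⟨hzE, hzs3E⟩ := memE z hzE1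
  obtain ⟨hzs2E, hzs2s3E⟩ := memE _ hzs2E1
  obtain ⟨hzs1E, hzs1s3E⟩ := memE _ hz1E1
  obtain ⟨hzs1s2E, _h7⟩ := memE _ hz1s2E1
  -- distinctness facts
  have n30 : s3 ≠ 0 := by simpa using hs3B
  have hs2B' := hs2B
  simp only [Finset.mem_insert, Finset.mem_singleton] at hs2B'
  push_neg at hs2B'
  obtain ⟨n20, n23, n2m3⟩ := hs2B'
  have hs1B' := hs1B
  simp only [Finset.mem_insert, Finset.mem_singleton] at hs1B'
  push_neg at hs1B'
  obtain ⟨n10, n12, n1m2, n13, n1m3, nf, ng, nh⟩ := hs1B'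
  refine ⟨z, s1, s2, s3, hs1S, hs2S, hs3S, ?_, ?_⟩
  · refine List.Pairwise.cons ?_ (List.Pairwise.cons ?_ (List.Pairwise.cons ?_
      (List.Pairwise.cons ?_ (List.Pairwise.cons ?_ (List.Pairwise.cons ?_
        (List.pairwise_singleton _ _))))))
    · intro b hb
      simp only [List.mem_cons, List.not_mem_nil, or_false] at hb
      rcases hb with rfl|rfl|rfl|rfl|rfl|rfl
      · exact fun h => n10 (by linear_combination -h)
      · exact fun h => n20 (by linear_combination -h)
      · exact fun h => n30 (by linear_combination -h)
      · exact fun h => n1m2 (by linear_combination -h)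
      · exact fun h => n1m3 (by linear_combination -h)
      · exact fun h => n2m3 (by linear_combination -h)
    · intro b hb
      simp only [List.mem_cons, List.not_mem_nil, or_false] at hb
      rcases hb with rfl|rfl|rfl|rfl|rfl
      · exact fun h => n12 (by linear_combination h)
      · exact fun h => n13 (by linear_combination h)
      · exact fun h => n20 (by linear_combination -h)
      · exact fun h => n30 (by linear_combination -h)
      · exact fun h => nf (by linear_combination h)
    · intro b hb
      simp only [List.mem_cons, List.not_mem_nil, or_false] at hb
      rcases hb with rfl|rfl|rfl|rfl
      · exact fun h => n23 (by linear_combination h)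
      · exact fun h => n10 (by linear_combination -h)
      · exact fun h => ng (by linear_combination -h)
      · exact fun h => n30 (by linear_combination -h)
    · intro b hb
      simp only [List.mem_cons, List.not_mem_nil, or_false] at hb
      rcases hb with rfl|rfl|rfl
      · exact fun h => nh (by linear_combination -h)
      · exact fun h => n10 (by linear_combination -h)
      · exact fun h => n20 (by linear_combination -h)
    · intro b hb
      simp only [List.mem_cons, List.not_mem_nil, or_false] at hb
      rcases hb with rfl|rfl
      · exact fun h => n23 (by linear_combination h)
      · exact fun h => n13 (by linear_combination h)
    · intro b hb
      simp only [List.mem_cons, List.not_mem_nil, or_false] at hb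
      rcases hb with rfl
      exact fun h => n12 (by linear_combination h)
  · intro p hp
    simp only [List.mem_cons, List.not_mem_nil, or_false] at hp
    rcases hp with rfl|rfl|rfl|rfl|rfl|rfl|rfl
    exacts [hzE, hzs1E, hzs2E, hzs3E, hzs1s2E, hzs1s3E, hzs2s3E]
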